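/- If x is a real number with 0 ≤ x ≤ 1/11, then 1 + x + x² ≥ e^{x + 2x²/5}, with equality if and only if x = 0. -/
import Mathlib

theorem stmt_4 (x : ℝ) (hx0 : 0 ≤ x) (hx : x ≤ 1 / 11) :
    1 + x + x ^ 2 ≥ Real.exp (x + 2 * x ^ 2 / 5) ∧
      (1 + x + x ^ 2 = Real.exp (x + 2 * x ^ 2 / 5) ↔ x = 0) := by
  set t := x + 2 * x ^ 2 / 5 with ht
  have ht0 : 0 ≤ t := by rw [ht]; nlinarith
  have ht1 : t ≤ 1 := by rw [ht]; nlinarith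
  have hb := Real.exp_bound' ht0 ht1 (n := 3) (by norm_num)
  simp [Finset.sum_range_succ, Nat.factorial] at hb
  have hkey : Real.exp t ≤ 1 + t + t ^ 2 / 2 + 2 * t ^ 3 / 9 := by
    nlinarith [hb]
  have hstrict : 0 < x → Real.exp t < 1 + x + x ^ 2 := by
    intro hxp
    have : 1 + t + t ^ 2 / 2 + 2 * t ^ 3 / 9 < 1 + x + x ^ 2 := by
      rw [ht]; nlinarith [sq_nonneg x, pow_pos hxp 2, pow_pos hxp 3, pow_pos hxp 4]
    linarith
  constructor
  · rcases eq_or_lt_of_le hx0 with h | h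
    · simp [ht, ← h]
    · exact le_of_lt (hstrict h)
  · constructor
    · intro heq
      by_contra hne
      have hxp : 0 < x := lt_of_le_of_ne hx0 (Ne.symm hne)
      exact absurd heq (ne_of_gt (hstrict hxp))
    · intro h; simp [ht, h]
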